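/- Theorem 1 (ISS of single-layer GRUs): fix λ̌ ≥ 1 and suppose ‖U_r‖_∞ · σ(‖[W_f U_f b_f]‖_∞) < 1. Then the single-layer GRU is Input-to-State Stable: there exist a class-KL function β and class-K∞ functions γ_u, γ_b such that for every bias vector b_r ∈ ℝ^{n_x}, every initial state x̄ with ‖x̄‖_∞ ≤ λ̌, every input sequence u with ‖u(t)‖_∞ ≤ 1 for all t, and every k ≥ 0, the state trajectory satisfies ‖x(k)‖_∞ ≤ β(‖x̄‖_∞, k) + γ_u(sup_t ‖u(t)‖_∞) + γ_b(‖b_r‖_∞). -/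

import Mathlib

open Real Filter

/-- The sigmoid activation function. -/
noncomputable def sigmoid (s : ℝ) : ℝ := 1 / (1 + Real.exp (-s))

/-- Induced infinity norm of a matrix (maximum absolute row sum). -/
noncomputable def matNorm {n m : ℕ} (A : Matrix (Fin n) (Fin m) ℝ) : ℝ :=
  ⨆ i, ∑ j, |A i j|

/-- Infinity norm of the horizontal concatenation `[A B c]`
(maximum absolute row sum of the concatenated matrix). -/
noncomputable def catNorm {n m p : ℕ} (A : Matrix (Fin n) (Fin m) ℝ)
    (B : Matrix (Fin n) (Fin p) ℝ) (c : Fin n → ℝ) : ℝ :=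
  ⨆ i, (∑ j, |A i j| + ∑ j, |B i j| + |c i|)

/-- One step of the single-layer GRU:
`x⁺ = z ∘ x + (1 - z) ∘ tanh(W_r u + U_r (f ∘ x) + b_r)`,
`z = σ(W_z u + U_z x + b_z)`, `f = σ(W_f u + U_f x + b_f)`. -/
noncomputable def gruStep {nu nx : ℕ}
    (Wz Wf Wr : Matrix (Fin nx) (Fin nu) ℝ)
    (Uz Uf Ur : Matrix (Fin nx) (Fin nx) ℝ)
    (bz bf br : Fin nx → ℝ)
    (u : Fin nu → ℝ) (x : Fin nx → ℝ) : Fin nx → ℝ :=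
  let z : Fin nx → ℝ := fun i => _root_.sigmoid ((Wz.mulVec u + Uz.mulVec x + bz) i)
  let f : Fin nx → ℝ := fun i => _root_.sigmoid ((Wf.mulVec u + Uf.mulVec x + bf) i)
  let r : Fin nx → ℝ := fun i => Real.tanh ((Wr.mulVec u + Ur.mulVec (f * x) + br) i)
  fun j => z j * x j + (1 - z j) * r j

/-- A function `γ : [0,∞) → [0,∞)` is of class K∞ if it is continuous,
strictly increasing, unbounded and `γ 0 = 0`. -/
def IsKInf (γ : ℝ → ℝ) : Prop :=
  ContinuousOn γ (Set.Ici 0) ∧ StrictMonoOn γ (Set.Ici 0) ∧ γ 0 = 0 ∧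
    ∀ M : ℝ, ∃ s, 0 ≤ s ∧ M < γ s

/-- A function `β : [0,∞) × ℕ → [0,∞)` is of class KL if `β (·, k)` is of class K∞
for each `k`, `β (s, ·)` is nonincreasing, and `β (s, k) → 0` as `k → ∞`. -/
def IsKL (β : ℝ → ℕ → ℝ) : Prop :=
  (∀ k : ℕ, IsKInf fun s => β s k) ∧
    (∀ s : ℝ, 0 ≤ s → ∀ k l : ℕ, k ≤ l → β s l ≤ β s k) ∧
    (∀ s : ℝ, 0 ≤ s → Filter.Tendsto (fun k : ℕ => β s k) Filter.atTop (nhds 0))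

/-! ### Auxiliary lemmas -/

lemma sigmoid_pos (s : ℝ) : 0 < _root_.sigmoid s := by unfold _root_.sigmoid; positivity

lemma sigmoid_lt_one (s : ℝ) : _root_.sigmoid s < 1 := by
  unfold _root_.sigmoid
  rw [div_lt_one (by positivity)]
  linarith [Real.exp_pos (-s)]

lemma sigmoid_mono {a b : ℝ} (h : a ≤ b) : _root_.sigmoid a ≤ _root_.sigmoid b := by
  unfold _root_.sigmoid
  exact one_div_le_one_div_of_le (by positivity) (by simpa using Real.exp_le_exp.2 (neg_le_neg h))

lemma sigmoid_continuous : Continuous _root_.sigmoid := by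
  unfold _root_.sigmoid
  exact continuous_const.div
    (continuous_const.add (Real.continuous_exp.comp continuous_neg)) (fun x => by positivity)

lemma sinh_le_mul_cosh {x : ℝ} (hx : 0 ≤ x) : Real.sinh x ≤ x * Real.cosh x := by
  have key : MonotoneOn (fun t : ℝ => t * Real.cosh t - Real.sinh t) (Set.Ici 0) := by
    apply monotoneOn_of_deriv_nonneg (convex_Ici 0)
    · exact ((continuous_id.mul Real.continuous_cosh).sub Real.continuous_sinh).continuousOn
    · intro t _
      exact ((differentiableAt_id.mul (Real.differentiable_cosh t)).sub
        (Real.differentiable_sinh t)).differentiableWithinAt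
    · intro t ht
      rw [interior_Ici, Set.mem_Ioi] at ht
      have hd : HasDerivAt (fun t : ℝ => t * Real.cosh t - Real.sinh t) (t * Real.sinh t) t := by
        have h1 := (hasDerivAt_id t).mul (Real.hasDerivAt_cosh t)
        have h2 := h1.sub (Real.hasDerivAt_sinh t)
        exact h2.congr_deriv (by simp only [id_eq]; ring)
      rw [hd.deriv]
      exact mul_nonneg ht.le (Real.sinh_nonneg_iff.2 ht.le)
  have h := key Set.self_mem_Ici (Set.mem_Ici.2 hx) hx
  simp only [Real.cosh_zero, Real.sinh_zero, zero_mul, sub_zero, mul_zero] at h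
  linarith

lemma abs_tanh_le_one (x : ℝ) : |Real.tanh x| ≤ 1 := by
  rw [Real.tanh_eq_sinh_div_cosh, abs_div, abs_of_pos (Real.cosh_pos (x := x)),
    div_le_one (Real.cosh_pos (x := x)), Real.abs_sinh, ← Real.cosh_abs]
  exact (Real.sinh_lt_cosh _).le

lemma abs_tanh_le_abs (x : ℝ) : |Real.tanh x| ≤ |x| := by
  have key : ∀ y : ℝ, 0 ≤ y → Real.tanh y ≤ y := by
    intro y hy
    rw [Real.tanh_eq_sinh_div_cosh, div_le_iff₀ (Real.cosh_pos _)]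
    exact sinh_le_mul_cosh hy
  rcases le_total 0 x with hx | hx
  · rw [abs_of_nonneg hx, abs_of_nonneg]
    · exact key x hx
    · rw [Real.tanh_eq_sinh_div_cosh]
      exact div_nonneg (Real.sinh_nonneg_iff.2 hx) (Real.cosh_pos _).le
  · rw [abs_of_nonpos hx, abs_of_nonpos]
    · have h := key (-x) (by linarith)
      rw [Real.tanh_neg] at h; linarith
    · rw [Real.tanh_eq_sinh_div_cosh]
      exact div_nonpos_of_nonpos_of_nonneg (Real.sinh_nonpos_iff.2 hx) (Real.cosh_pos _).le

lemma row_le_matNorm {n m : ℕ} (A : Matrix (Fin n) (Fin m) ℝ) (i : Fin n) :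
    ∑ j, |A i j| ≤ matNorm A := by
  unfold matNorm
  exact le_ciSup (f := fun i => ∑ j, |A i j|) (Set.Finite.bddAbove (Set.finite_range _)) i

lemma matNorm_nonneg {n m : ℕ} (A : Matrix (Fin n) (Fin m) ℝ) : 0 ≤ matNorm A :=
  Real.iSup_nonneg fun _ => Finset.sum_nonneg fun _ _ => abs_nonneg _

lemma cat_row_le {n m p : ℕ} (A : Matrix (Fin n) (Fin m) ℝ)
    (B : Matrix (Fin n) (Fin p) ℝ) (c : Fin n → ℝ) (i : Fin n) :
    ∑ j, |A i j| + ∑ j, |B i j| + |c i| ≤ catNorm A B c := by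
  unfold catNorm
  exact le_ciSup (f := fun i => ∑ j, |A i j| + ∑ j, |B i j| + |c i|) (Set.Finite.bddAbove (Set.finite_range _)) i

lemma mulVec_row_bound {n m : ℕ} (A : Matrix (Fin n) (Fin m) ℝ) (w : Fin m → ℝ)
    (c : ℝ) (hw : ∀ j, |w j| ≤ c) (i : Fin n) :
    |A.mulVec w i| ≤ (∑ j, |A i j|) * c := by
  calc |A.mulVec w i| = |∑ j, A i j * w j| := by
        simp [Matrix.mulVec, dotProduct]
    _ ≤ ∑ j, |A i j * w j| := Finset.abs_sum_le_sum_abs _ _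
    _ = ∑ j, |A i j| * |w j| := by simp [abs_mul]
    _ ≤ ∑ j, |A i j| * c :=
        Finset.sum_le_sum fun j _ => mul_le_mul_of_nonneg_left (hw j) (abs_nonneg _)
    _ = (∑ j, |A i j|) * c := (Finset.sum_mul _ _ _).symm

lemma mulVec_bound {n m : ℕ} (A : Matrix (Fin n) (Fin m) ℝ) (w : Fin m → ℝ) (i : Fin n) :
    |A.mulVec w i| ≤ matNorm A * ‖w‖ := by
  refine (mulVec_row_bound A w ‖w‖ (fun j => by
    simpa [Real.norm_eq_abs] using norm_le_pi_norm w j) i).trans ?_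
  exact mul_le_mul_of_nonneg_right (row_le_matNorm A i) (norm_nonneg _)

lemma linear_KInf {a : ℝ} (ha : 0 < a) : IsKInf (fun s => a * s) := by
  refine ⟨(continuous_const.mul continuous_id).continuousOn, ?_, mul_zero a, ?_⟩
  · intro s _ t _ hst
    exact mul_lt_mul_of_pos_left hst ha
  · intro M
    refine ⟨max 0 (M / a) + 1, by linarith [le_max_left (0:ℝ) (M / a)], ?_⟩
    have h1 : M / a < max 0 (M / a) + 1 := (le_max_right _ _).trans_lt (lt_add_one _)
    have h2 : M < (max 0 (M / a) + 1) * a := (div_lt_iff₀ ha).1 h1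
    calc M < (max 0 (M / a) + 1) * a := h2
      _ = a * (max 0 (M / a) + 1) := mul_comm _ _

set_option maxHeartbeats 1000000

/-- **Theorem 1 (ISS of single-layer GRUs).**
If `‖U_r‖_∞ σ(‖[W_f U_f b_f]‖_∞) < 1` then the GRU is Input-to-State Stable: there are
a class-KL function `β` and class-K∞ functions `γ_u, γ_b` such that for every bias `b_r`,
every initial state with `‖x̄‖_∞ ≤ λ̌`, and every unity-bounded input sequence,
`‖x(k)‖_∞ ≤ β(‖x̄‖_∞, k) + γ_u(sup_t ‖u(t)‖_∞) + γ_b(‖b_r‖_∞)`. -/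
theorem gru_ISS {nu nx : ℕ}
    (Wz Wf Wr : Matrix (Fin nx) (Fin nu) ℝ)
    (Uz Uf Ur : Matrix (Fin nx) (Fin nx) ℝ)
    (bz bf : Fin nx → ℝ)
    (lam : ℝ) (hlam : 1 ≤ lam)
    (hcond : matNorm Ur * _root_.sigmoid (catNorm Wf Uf bf) < 1) :
    ∃ β : ℝ → ℕ → ℝ, ∃ γu γb : ℝ → ℝ, IsKL β ∧ IsKInf γu ∧ IsKInf γb ∧
      ∀ br : Fin nx → ℝ, ∀ xbar : Fin nx → ℝ, ‖xbar‖ ≤ lam →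
        ∀ u : ℕ → Fin nu → ℝ, (∀ t, ‖u t‖ ≤ 1) →
          ∀ x : ℕ → Fin nx → ℝ, x 0 = xbar →
            (∀ k, x (k + 1) = gruStep Wz Wf Wr Uz Uf Ur bz bf br (u k) (x k)) →
              ∀ k : ℕ, ‖x k‖ ≤ β ‖xbar‖ k + γu (⨆ t, ‖u t‖) + γb ‖br‖ := by
  -- choose ε > 0 keeping the contraction condition
  obtain ⟨ε, hε, hαlt⟩ :
      ∃ ε : ℝ, 0 < ε ∧ matNorm Ur * _root_.sigmoid (catNorm Wf Uf bf + matNorm Uf * ε) < 1 := by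
    have hopen : IsOpen {e : ℝ | matNorm Ur * _root_.sigmoid (catNorm Wf Uf bf + matNorm Uf * e) < 1} :=
      isOpen_lt (continuous_const.mul (sigmoid_continuous.comp
        (continuous_const.add (continuous_const.mul continuous_id)))) continuous_const
    have h0 : (0 : ℝ) ∈ {e : ℝ | matNorm Ur * _root_.sigmoid (catNorm Wf Uf bf + matNorm Uf * e) < 1} :=
      by simpa using hcond
    obtain ⟨δ, hδ, hball⟩ := Metric.isOpen_iff.1 hopen 0 h0
    exact ⟨δ / 2, by positivity, hball (by
      simp only [Metric.mem_ball, Real.dist_eq, sub_zero]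
      rw [abs_of_pos (by positivity)]; linarith)⟩
  set σf : ℝ := _root_.sigmoid (catNorm Wf Uf bf + matNorm Uf * ε) with hσf
  set α : ℝ := matNorm Ur * σf with hα
  have hα0 : 0 ≤ α := mul_nonneg (matNorm_nonneg _) (_root_.sigmoid_pos _).le
  set zb : ℝ := _root_.sigmoid (matNorm Wz + matNorm Uz * lam + ‖bz‖) with hzb
  have hzb0 : 0 < zb := _root_.sigmoid_pos _
  have hzb1 : zb < 1 := _root_.sigmoid_lt_one _
  set ρ1 : ℝ := zb + (1 - zb) * α with hρ1
  set ρ2 : ℝ := (1 + zb * ε) / (1 + ε) with hρ2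
  set ρ : ℝ := max ρ1 ρ2 with hρ
  have hρ0 : 0 < ρ := lt_max_of_lt_left (by nlinarith)
  have hρlt : ρ < 1 := by
    apply max_lt
    · nlinarith
    · rw [div_lt_one (by linarith)]; nlinarith
  have h1ρ : 0 < 1 - ρ := by linarith
  refine ⟨fun s k => ρ ^ k * s, fun s => (matNorm Wr / (1 - ρ) + 1) * s,
    fun s => (1 / (1 - ρ) + 1) * s, ?_, ?_, ?_, ?_⟩
  · refine ⟨fun k => linear_KInf (pow_pos hρ0 k), ?_, ?_⟩
    · intro s hs k l hkl
      exact mul_le_mul_of_nonneg_right (pow_le_pow_of_le_one hρ0.le hρlt.le hkl) hs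
    · intro s _
      have := (tendsto_pow_atTop_nhds_zero_of_lt_one hρ0.le hρlt).mul_const s
      simpa using this
  · exact linear_KInf (by linarith [div_nonneg (matNorm_nonneg Wr) h1ρ.le])
  · exact linear_KInf (by linarith [div_nonneg (zero_le_one (α := ℝ)) h1ρ.le])
  intro br xbar hxbar u hu x hx0 hstep k
  set U : ℝ := ⨆ t, ‖u t‖ with hUdef
  have hUb : ∀ t, ‖u t‖ ≤ U :=
    fun t => le_ciSup (f := fun t => ‖u t‖) ⟨1, by rintro a ⟨t, rfl⟩; exact hu t⟩ t
  have hU0 : 0 ≤ U := (norm_nonneg _).trans (hUb 0)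
  set G : ℝ := matNorm Wr * U + ‖br‖ with hG
  have hG0 : 0 ≤ G := add_nonneg (mul_nonneg (matNorm_nonneg _) hU0) (norm_nonneg _)
  -- the key one-step estimate
  have key : ∀ (v : Fin nu → ℝ) (y : Fin nx → ℝ), ‖v‖ ≤ 1 → ‖y‖ ≤ lam →
      ‖gruStep Wz Wf Wr Uz Uf Ur bz bf br v y‖ ≤ lam ∧
      ‖gruStep Wz Wf Wr Uz Uf Ur bz bf br v y‖ ≤ ρ * ‖y‖ + (matNorm Wr * ‖v‖ + ‖br‖) := by
    intro v y hv hy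
    have hy0 : 0 ≤ ‖y‖ := norm_nonneg y
    have hv0 : 0 ≤ ‖v‖ := norm_nonneg v
    set Gv : ℝ := matNorm Wr * ‖v‖ + ‖br‖ with hGv
    have hGv0 : 0 ≤ Gv := add_nonneg (mul_nonneg (matNorm_nonneg _) hv0) (norm_nonneg _)
    have hcomp : ∀ j : Fin nx,
        |gruStep Wz Wf Wr Uz Uf Ur bz bf br v y j| ≤ min lam (ρ * ‖y‖ + Gv) := by
      intro j
      simp only [gruStep]
      set zj : ℝ := _root_.sigmoid ((Wz.mulVec v + Uz.mulVec y + bz) j) with hzj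
      set ffun : Fin nx → ℝ :=
        fun i => _root_.sigmoid ((Wf.mulVec v + Uf.mulVec y + bf) i) with hffun
      set aj : ℝ := (Wr.mulVec v + Ur.mulVec (ffun * y) + br) j with haj
      have hz0 : 0 < zj := _root_.sigmoid_pos _
      have hz1 : zj < 1 := _root_.sigmoid_lt_one _
      have hzle : zj ≤ zb := by
        apply sigmoid_mono
        have h1 : |(Wz.mulVec v + Uz.mulVec y + bz) j| ≤
            matNorm Wz * ‖v‖ + matNorm Uz * ‖y‖ + ‖bz‖ := by
          simp only [Pi.add_apply]
          refine (abs_add_le _ _).trans (add_le_add ((abs_add_le _ _).trans (add_le_add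
            (mulVec_bound Wz v j) (mulVec_bound Uz y j))) ?_)
          simpa [Real.norm_eq_abs] using norm_le_pi_norm bz j
        refine (le_abs_self _).trans (h1.trans ?_)
        have := matNorm_nonneg Wz
        have := matNorm_nonneg Uz
        nlinarith
      have habs : ∀ T : ℝ, |Real.tanh aj| ≤ T →
          |zj * y j + (1 - zj) * Real.tanh aj| ≤ zj * ‖y‖ + (1 - zj) * T := by
        intro T hT
        refine (abs_add_le _ _).trans ?_
        rw [abs_mul, abs_mul, abs_of_pos hz0, abs_of_pos (by linarith : (0:ℝ) < 1 - zj)]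
        refine add_le_add (mul_le_mul_of_nonneg_left ?_ hz0.le)
          (mul_le_mul_of_nonneg_left hT (by linarith))
        simpa [Real.norm_eq_abs] using norm_le_pi_norm y j
      have hbound1 : |zj * y j + (1 - zj) * Real.tanh aj| ≤ zj * ‖y‖ + (1 - zj) * 1 :=
        habs 1 (abs_tanh_le_one aj)
      refine le_min (hbound1.trans (by nlinarith)) ?_
      by_cases hcase : ‖y‖ ≤ 1 + ε
      · -- contraction regime
        have hfle : ∀ i, ffun i ≤ σf := by
          intro i
          apply sigmoid_mono
          have h1 : |(Wf.mulVec v + Uf.mulVec y + bf) i| ≤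
              (∑ j, |Wf i j|) * ‖v‖ + (∑ j, |Uf i j|) * ‖y‖ + |bf i| := by
            simp only [Pi.add_apply]
            refine (abs_add_le _ _).trans (add_le_add ((abs_add_le _ _).trans (add_le_add
              (mulVec_row_bound Wf v ‖v‖ (fun j => by
                simpa [Real.norm_eq_abs] using norm_le_pi_norm v j) i)
              (mulVec_row_bound Uf y ‖y‖ (fun j => by
                simpa [Real.norm_eq_abs] using norm_le_pi_norm y j) i))) le_rfl)
          refine (le_abs_self _).trans (h1.trans ?_)
          have hWfrow : (0:ℝ) ≤ ∑ j, |Wf i j| := Finset.sum_nonneg fun _ _ => abs_nonneg _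
          have hUfrow : (0:ℝ) ≤ ∑ j, |Uf i j| := Finset.sum_nonneg fun _ _ => abs_nonneg _
          have hcat := cat_row_le Wf Uf bf i
          have hUfmat := row_le_matNorm Uf i
          nlinarith
        have hfy : ∀ i, |(ffun * y) i| ≤ σf * ‖y‖ := by
          intro i
          have hfi0 : 0 < ffun i := _root_.sigmoid_pos _
          rw [Pi.mul_apply, abs_mul, abs_of_pos hfi0]
          exact mul_le_mul (hfle i) (by
            simpa [Real.norm_eq_abs] using norm_le_pi_norm y i) (abs_nonneg _)
            (_root_.sigmoid_pos _).le
        have haj_bound : |aj| ≤ α * ‖y‖ + Gv := by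
          rw [haj]
          simp only [Pi.add_apply]
          refine (abs_add_le _ _).trans ?_
          have h2 : |Ur.mulVec (ffun * y) j| ≤ α * ‖y‖ := by
            refine (mulVec_row_bound Ur (ffun * y) (σf * ‖y‖) hfy j).trans ?_
            rw [hα, mul_assoc]
            exact mul_le_mul_of_nonneg_right (row_le_matNorm Ur j)
              (mul_nonneg (_root_.sigmoid_pos _).le hy0)
          have h3 : |br j| ≤ ‖br‖ := by
            simpa [Real.norm_eq_abs] using norm_le_pi_norm br j
          have h1 := (abs_add_le (Wr.mulVec v j) (Ur.mulVec (ffun * y) j)).trans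
            (add_le_add (mulVec_bound Wr v j) h2)
          rw [hGv]; linarith
        have htanh : |Real.tanh aj| ≤ α * ‖y‖ + Gv :=
          (abs_tanh_le_abs aj).trans haj_bound
        have hb := habs _ htanh
        have hρ1le : ρ1 ≤ ρ := le_max_left _ _
        calc |zj * y j + (1 - zj) * Real.tanh aj|
            ≤ zj * ‖y‖ + (1 - zj) * (α * ‖y‖ + Gv) := hb
          _ ≤ ρ1 * ‖y‖ + Gv := by
              rw [hρ1]
              nlinarith [mul_nonneg (mul_nonneg (sub_nonneg.2 hzle)
                (by linarith : (0:ℝ) ≤ 1 - α)) hy0, mul_nonneg hz0.le hGv0]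
          _ ≤ ρ * ‖y‖ + Gv := by nlinarith
      · -- large-state regime
        push_neg at hcase
        have hb := hbound1
        have hρ2le : ρ2 ≤ ρ := le_max_right _ _
        have h2 : zj * ‖y‖ + (1 - zj) * 1 ≤ ρ2 * ‖y‖ := by
          rw [hρ2, div_mul_eq_mul_div, le_div_iff₀ (by linarith : (0:ℝ) < 1 + ε)]
          nlinarith [mul_nonneg (by linarith : (0:ℝ) ≤ 1 - zj)
              (by linarith : (0:ℝ) ≤ ‖y‖ - (1 + ε)),
            mul_nonneg (mul_nonneg hε.le (sub_nonneg.2 hzle)) hy0]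
        calc |zj * y j + (1 - zj) * Real.tanh aj|
            ≤ zj * ‖y‖ + (1 - zj) * 1 := hb
          _ ≤ ρ2 * ‖y‖ := h2
          _ ≤ ρ * ‖y‖ + Gv := by nlinarith
    have hmin0 : 0 ≤ min lam (ρ * ‖y‖ + Gv) :=
      le_min (by linarith) (by positivity)
    have hnorm : ‖gruStep Wz Wf Wr Uz Uf Ur bz bf br v y‖ ≤ min lam (ρ * ‖y‖ + Gv) := by
      rw [pi_norm_le_iff_of_nonneg hmin0]
      intro j
      simpa [Real.norm_eq_abs] using hcomp j
    exact ⟨hnorm.trans (min_le_left _ _), hnorm.trans (min_le_right _ _)⟩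
  -- main induction
  have main : ∀ k : ℕ, ‖x k‖ ≤ lam ∧ ‖x k‖ ≤ ρ ^ k * ‖xbar‖ + G / (1 - ρ) := by
    intro k
    induction k with
    | zero =>
      rw [hx0, pow_zero, one_mul]
      exact ⟨hxbar, le_add_of_nonneg_right (div_nonneg hG0 h1ρ.le)⟩
    | succ k ih =>
      obtain ⟨hlk, hbk⟩ := ih
      have hk := key (u k) (x k) (hu k) hlk
      rw [← hstep k] at hk
      refine ⟨hk.1, ?_⟩
      have hGvle : matNorm Wr * ‖u k‖ + ‖br‖ ≤ G := by
        rw [hG]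
        have := mul_le_mul_of_nonneg_left (hUb k) (matNorm_nonneg Wr)
        linarith
      have hstep2 : ‖x (k + 1)‖ ≤ ρ * ‖x k‖ + G := hk.2.trans (by linarith)
      have h3 : ρ * ‖x k‖ ≤ ρ * (ρ ^ k * ‖xbar‖ + G / (1 - ρ)) :=
        mul_le_mul_of_nonneg_left hbk hρ0.le
      have hid : ρ * (ρ ^ k * ‖xbar‖ + G / (1 - ρ)) + G =
          ρ ^ (k + 1) * ‖xbar‖ + G / (1 - ρ) := by
        field_simp
        ring
      linarith
  have hfinal := (main k).2
  have hgain : G / (1 - ρ) ≤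
      (matNorm Wr / (1 - ρ) + 1) * U + (1 / (1 - ρ) + 1) * ‖br‖ := by
    have hbr0 : (0:ℝ) ≤ ‖br‖ := norm_nonneg _
    have hid : (matNorm Wr / (1 - ρ) + 1) * U + (1 / (1 - ρ) + 1) * ‖br‖ -
        G / (1 - ρ) = U + ‖br‖ := by
      rw [hG]; field_simp; ring
    linarith
  calc ‖x k‖ ≤ ρ ^ k * ‖xbar‖ + G / (1 - ρ) := hfinal
    _ ≤ ρ ^ k * ‖xbar‖ + ((matNorm Wr / (1 - ρ) + 1) * U + (1 / (1 - ρ) + 1) * ‖br‖) := by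
        linarith
    _ = ρ ^ k * ‖xbar‖ + (matNorm Wr / (1 - ρ) + 1) * U + (1 / (1 - ρ) + 1) * ‖br‖ := by
        ring
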